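/- arXiv:1303.5106 — 5 statements merged into one kernel-verified Lean document; each statement's English description precedes it below -/
import Mathlib

section
/- Let A be a local ring with involution * whose fixed points lie in the center, with Jacobson radical r, and suppose there exists d ∈ A with d + d* = 1. Let V be a free A-module of finite rank m ≥ 1 with a non-degenerate *-hermitian form h (i.e., the map V → V*, u ↦ h(u,−) is an isomorphism). Then there exists a vector u ∈ V such that h(u,u) is a unit of the fixed ring R. -/
open MulOpposite

/-- A `*`-hermitian form on a right `A`-module `V` (right modules are encoded as
modules over the opposite ring `Aᵐᵒᵖ`): it is additive and `A`-linear in the second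
variable and satisfies `h v u = (h u v)*`. -/
structure HermitianForm (A V : Type*) [Ring A] [StarRing A] [AddCommGroup V]
    [Module Aᵐᵒᵖ V] where
  toFun : V → V → A
  add_right : ∀ u v w : V, toFun u (v + w) = toFun u v + toFun u w
  smul_right : ∀ (a : A) (u v : V), toFun u (op a • v) = toFun u v * a
  conj_symm : ∀ u v : V, toFun v u = star (toFun u v)

namespace HermitianForm

variable {A V : Type*} [Ring A] [StarRing A] [AddCommGroup V] [Module Aᵐᵒᵖ V]

/-- Non-degeneracy: the map `u ↦ h u -` is a bijection of `V` onto the dual module. -/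
def Nondeg (h : HermitianForm A V) : Prop :=
  ∀ φ : V →ₗ[Aᵐᵒᵖ] A, ∃! u : V, ∀ v : V, h.toFun u v = φ v

end HermitianForm

/-- A vector of the free module `V` of rank `m` is primitive if it belongs to a basis. -/
def IsPrimitive (A : Type*) {V : Type*} [Ring A] [AddCommGroup V] [Module Aᵐᵒᵖ V]
    (m : ℕ) (v : V) : Prop :=
  ∃ (b : Module.Basis (Fin m) Aᵐᵒᵖ V) (i : Fin m), b i = v

private lemma cent_unit {A : Type*} [Ring A] {x : A} (hx : x ∈ Set.center A)
    {t : A} (h : IsUnit (x * t)) : IsUnit x := by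
  obtain ⟨w, hw⟩ := h
  refine isUnit_iff_exists.mpr ⟨t * ↑w⁻¹, ?_, ?_⟩
  · rw [← mul_assoc, ← hw, Units.mul_inv]
  · have hc := (Set.mem_center_iff.mp hx).1
    calc t * ↑w⁻¹ * x = t * x * ↑w⁻¹ := by rw [mul_assoc, ← hc (↑w⁻¹ : A), ← mul_assoc]
    _ = x * t * ↑w⁻¹ := by rw [hc]
    _ = 1 := by rw [← hw, Units.mul_inv]

private lemma nonunit_add {A : Type*} [Ring A] [IsLocalRing A] {x y : A}
    (hx : x ∈ Set.center A) (hy : y ∈ Set.center A)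
    (hxu : ¬ IsUnit x) (hyu : ¬ IsUnit y) : ¬ IsUnit (x + y) := by
  rintro ⟨w, hw⟩
  have h1 : x * ↑w⁻¹ + y * ↑w⁻¹ = 1 := by
    rw [← add_mul, ← hw, Units.mul_inv]
  rcases IsLocalRing.isUnit_or_isUnit_of_add_one h1 with h | h
  · exact hxu (cent_unit hx h)
  · exact hyu (cent_unit hy h)

/-- Lemma 2.1: there is a vector whose length is a unit of the fixed ring `R`
(lengths are automatically fixed by `*`; a fixed element is a unit of `R` iff
it is a unit of `A`). -/
theorem stmt_0 {A V : Type*} [Ring A] [StarRing A] [IsLocalRing A]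
    [AddCommGroup V] [Module Aᵐᵒᵖ V]
    (hcent : ∀ a : A, star a = a → a ∈ Set.center A)
    (d : A) (hd : d + star d = 1)
    (m : ℕ) (hm : 1 ≤ m) (b : Module.Basis (Fin m) Aᵐᵒᵖ V)
    (h : HermitianForm A V) (hnd : h.Nondeg) :
    ∃ u : V, star (h.toFun u u) = h.toFun u u ∧ IsUnit (h.toFun u u) := by
  classical
  have hfix : ∀ u : V, star (h.toFun u u) = h.toFun u u := fun u => (h.conj_symm u u).symm
  have hcentuu : ∀ u : V, h.toFun u u ∈ Set.center A := fun u => hcent _ (hfix u)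
  have add_left : ∀ u v w : V, h.toFun (u + v) w = h.toFun u w + h.toFun v w := by
    intro u v w
    rw [h.conj_symm, h.add_right, star_add, ← h.conj_symm, ← h.conj_symm]
  have smul_left : ∀ (a : A) (u v : V), h.toFun (op a • u) v = star a * h.toFun u v := by
    intro a u v
    rw [h.conj_symm, h.smul_right, star_mul, ← h.conj_symm]
  set i0 : Fin m := ⟨0, hm⟩
  set v : V := b i0 with hv0
  by_cases hvu : IsUnit (h.toFun v v)
  · exact ⟨v, hfix v, hvu⟩
  -- construct the coordinate functional with values in A
  have hA : ∀ (a x : A), (op a • x : A) = x * a := fun _ _ => rfl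
  let φ : V →ₗ[Aᵐᵒᵖ] A :=
    { toFun := fun w => unop (b.coord i0 w)
      map_add' := by intro x y; simp
      map_smul' := by
        intro a x
        simp only [map_smul, RingHom.id_apply]
        rfl }
  obtain ⟨u, hu, -⟩ := hnd φ
  have huv : h.toFun u v = 1 := by
    have := hu v
    simpa [φ, hv0] using this
  by_cases huu : IsUnit (h.toFun u u)
  · exact ⟨u, hfix u, huu⟩
  · refine ⟨u + op d • v, hfix _, ?_⟩
    have hvu' : h.toFun v u = 1 := by rw [h.conj_symm, huv, star_one]
    have hexp : h.toFun (u + op d • v) (u + op d • v)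
        = 1 + (h.toFun u u + star d * h.toFun v v * d) := by
      rw [add_left, h.add_right, h.add_right, smul_left, smul_left, h.smul_right,
        h.smul_right, huv, hvu', one_mul, mul_one]
      rw [← hd]
      noncomm_ring
    rw [hexp]
    have hycent : star d * h.toFun v v * d ∈ Set.center A := by
      apply hcent
      simp [star_mul, star_star, hfix, mul_assoc]
    have hynu : ¬ IsUnit (star d * h.toFun v v * d) := by
      intro hy
      apply hvu
      have : star d * h.toFun v v * d = h.toFun v v * (star d * d) := by
        have hc := (Set.mem_center_iff.mp (hcentuu v)).1
        rw [← mul_assoc, hc]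
      rw [this] at hy
      exact cent_unit (hcentuu v) hy
    have hsum : ¬ IsUnit (h.toFun u u + star d * h.toFun v v * d) :=
      nonunit_add (hcentuu u) hycent huu hynu
    by_contra hcon
    have h1 : (1 + (h.toFun u u + star d * h.toFun v v * d))
        + (-(h.toFun u u + star d * h.toFun v v * d)) = 1 := by noncomm_ring
    rcases IsLocalRing.isUnit_or_isUnit_of_add_one h1 with hh | hh
    · exact hcon hh
    · exact hsum (by simpa using hh.neg)
end

section
/- Under the same hypotheses (A local with involution, fixed ring R central, d + d* = 1, V free of rank m with non-degenerate hermitian form h), V has an orthogonal basis u_1, ..., u_m, and for any orthogonal basis each h(u_i, u_i) is a unit of R. -/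
open MulOpposite

section LocalLemmas
variable {A : Type*} [Ring A] [IsLocalRing A]

lemma my_unit_or {a : A} : IsUnit a ∨ IsUnit (1 - a) :=
  IsLocalRing.isUnit_or_isUnit_of_add_one (by abel)

lemma my_inv_comm {a b : A} (h : a * b = 1) : b * a = 1 := by
  rcases my_unit_or (a := b * a) with hu | hu
  · have hid : (b * a) * (b * a) = (b * a) * 1 := by
      rw [mul_one, mul_assoc, ← mul_assoc a b, h, one_mul]
    exact hu.mul_left_cancel hid
  · have h2 : (b * a) * (b * a) = b * a := by
      rw [mul_assoc, ← mul_assoc a b, h, one_mul]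
    have hid : (1 - b * a) * (1 - b * a) = (1 - b * a) * 1 := by
      rw [mul_one, sub_mul, one_mul, mul_sub, mul_one, h2]; abel
    have h3 : (1 : A) - b * a = 1 := hu.mul_left_cancel hid
    have h4 : b * a = 0 := by
      have := sub_eq_self.mp h3; linear_combination (norm := noncomm_ring) this
    have hb : b = 0 := by
      have : b = (b * a) * b := by rw [mul_assoc, h, mul_one]
      rw [this, h4, zero_mul]
    exfalso
    apply one_ne_zero (α := A)
    rw [← h, hb, mul_zero]

lemma my_isUnit_left {a b : A} (h : a * b = 1) : IsUnit a :=
  ⟨⟨a, b, h, my_inv_comm h⟩, rfl⟩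

lemma my_isUnit_right {a b : A} (h : a * b = 1) : IsUnit b :=
  ⟨⟨b, a, my_inv_comm h, h⟩, rfl⟩

lemma my_isUnit_of_mul_left {a b : A} (h : IsUnit (a * b)) : IsUnit a := by
  rcases h with ⟨u, hu⟩
  exact my_isUnit_left (a := a) (b := b * ↑u⁻¹) (by rw [← mul_assoc, ← hu, u.mul_inv])

lemma my_isUnit_of_mul_right {a b : A} (h : IsUnit (a * b)) : IsUnit b := by
  rcases h with ⟨u, hu⟩
  exact my_isUnit_right (a := ↑u⁻¹ * a) (b := b) (by rw [mul_assoc, ← hu, u.inv_mul])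

lemma my_isUnit_or_of_add {a b : A} (h : IsUnit (a + b)) : IsUnit a ∨ IsUnit b := by
  rcases h with ⟨u, hu⟩
  have h1 : ↑u⁻¹ * a + ↑u⁻¹ * b = 1 := by rw [← mul_add, ← hu, u.inv_mul]
  rcases my_unit_or (a := ↑u⁻¹ * a) with h2 | h2
  · left
    have : a = ↑u * (↑u⁻¹ * a) := by rw [← mul_assoc, u.mul_inv, one_mul]
    rw [this]; exact u.isUnit.mul h2
  · right
    have h3 : (1 : A) - ↑u⁻¹ * a = ↑u⁻¹ * b := by rw [← h1, add_sub_cancel_left]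
    have : b = ↑u * (↑u⁻¹ * b) := by rw [← mul_assoc, u.mul_inv, one_mul]
    rw [this]; exact u.isUnit.mul (h3 ▸ h2)

lemma my_isUnit_sum {ι : Type*} {s : Finset ι} {f : ι → A}
    (h : IsUnit (∑ i ∈ s, f i)) : ∃ i ∈ s, IsUnit (f i) := by
  induction s using Finset.cons_induction with
  | empty => simp at h
  | cons a s ha ih =>
    rw [Finset.sum_cons] at h
    rcases my_isUnit_or_of_add h with h | h
    · exact ⟨a, Finset.mem_cons_self a s, h⟩
    · obtain ⟨i, hi, hui⟩ := ih h
      exact ⟨i, Finset.mem_cons_of_mem hi, hui⟩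

lemma my_isUnit_one_add {n : A} (hn : ¬ IsUnit n) : IsUnit (1 + n) := by
  rcases my_unit_or (a := -n) with h | h
  · exact absurd (IsUnit.neg h) (by simpa using hn)
  · rwa [sub_neg_eq_add] at h

end LocalLemmas


namespace HermitianForm
variable {A V : Type*} [Ring A] [StarRing A] [AddCommGroup V] [Module Aᵐᵒᵖ V]
variable (h : HermitianForm A V)

lemma zero_right' (u : V) : h.toFun u 0 = 0 := by
  have := h.add_right u 0 0
  rw [add_zero] at this
  exact left_eq_add.mp this

lemma add_left' (u v w : V) : h.toFun (u + v) w = h.toFun u w + h.toFun v w := by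
  rw [h.conj_symm w (u + v), h.add_right, star_add, ← h.conj_symm, ← h.conj_symm]

lemma smul_left' (a : A) (u v : V) :
    h.toFun (op a • u) v = star a * h.toFun u v := by
  rw [h.conj_symm v (op a • u), h.smul_right, star_mul, ← h.conj_symm]

lemma expand {m : ℕ} (u : Module.Basis (Fin m) Aᵐᵒᵖ V) (w v : V) :
    h.toFun w v = ∑ j, star (unop (u.repr w j)) * h.toFun (u j) v := by
  have hw : (∑ j, u.repr w j • u j) = w := u.sum_repr w
  have F : V →+ A := AddMonoidHom.mk' (h.toFun v) (h.add_right v)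
  have key : h.toFun v w = ∑ j, h.toFun v (u j) * unop (u.repr w j) := by
    conv_lhs => rw [← hw]
    rw [show h.toFun v (∑ j, u.repr w j • u j)
        = (AddMonoidHom.mk' (h.toFun v) (h.add_right v)) (∑ j, u.repr w j • u j) from rfl,
      map_sum]
    refine Finset.sum_congr rfl fun j _ => ?_
    have : u.repr w j • u j = op (unop (u.repr w j)) • u j := by rw [op_unop]
    rw [this]
    exact h.smul_right _ _ _
  rw [h.conj_symm v w, key, star_sum]
  refine Finset.sum_congr rfl fun j _ => ?_
  rw [star_mul, ← h.conj_symm]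

end HermitianForm



section Transvect
variable {A V : Type*} [Ring A] [AddCommGroup V] [Module Aᵐᵒᵖ V] {m : ℕ}

/-- The coordinate functional of a basis, valued in `A`. -/
noncomputable def coordFun (u : Module.Basis (Fin m) Aᵐᵒᵖ V) (k : Fin m) : V →ₗ[Aᵐᵒᵖ] A where
  toFun v := unop (u.repr v k)
  map_add' x y := by simp
  map_smul' c v := by
    simp [op_smul_eq_mul, Finsupp.smul_apply, smul_eq_mul]

lemma coordFun_basis (u : Module.Basis (Fin m) Aᵐᵒᵖ V) (k j : Fin m) :
    coordFun u k (u j) = if j = k then 1 else 0 := by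
  simp [coordFun, Module.Basis.repr_self, Finsupp.single_apply, apply_ite unop]

/-- Auxiliary linear functional `v ↦ ∑ j (repr v j) * op (a j)`. -/
noncomputable def lfun (u : Module.Basis (Fin m) Aᵐᵒᵖ V) (a : Fin m → A) : V →ₗ[Aᵐᵒᵖ] Aᵐᵒᵖ where
  toFun v := ∑ j, u.repr v j * op (a j)
  map_add' x y := by simp [add_mul, Finset.sum_add_distrib]
  map_smul' c v := by
    simp only [map_smul, Finsupp.smul_apply, smul_eq_mul, RingHom.id_apply, Finset.mul_sum,
      mul_assoc]

lemma lfun_basis (u : Module.Basis (Fin m) Aᵐᵒᵖ V) (a : Fin m → A) (j : Fin m) :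
    lfun u a (u j) = op (a j) := by
  simp [lfun, Module.Basis.repr_self, Finsupp.single_apply, ite_mul]

/-- The linear automorphism `v ↦ v + (∑ j (repr v j) * op (a j)) • u p`,
where `a p = 0`. -/
noncomputable def transvectEquiv (u : Module.Basis (Fin m) Aᵐᵒᵖ V) (p : Fin m) (a : Fin m → A)
    (hap : a p = 0) : V ≃ₗ[Aᵐᵒᵖ] V where
  toFun v := v + lfun u a v • u p
  invFun v := v - lfun u a v • u p
  map_add' x y := by simp only [map_add, add_smul]; abel
  map_smul' c v := by
    simp only [map_smul, smul_eq_mul, RingHom.id_apply, mul_smul, smul_add]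
  left_inv v := by
    have : lfun u a (v + lfun u a v • u p) = lfun u a v := by
      rw [map_add, map_smul, lfun_basis, hap, op_zero, smul_zero, add_zero]
    simp only [this, add_sub_cancel_right]
  right_inv v := by
    have : lfun u a (v - lfun u a v • u p) = lfun u a v := by
      rw [map_sub, map_smul, lfun_basis, hap, op_zero, smul_zero, sub_zero]
    simp only [this, sub_add_cancel]

/-- Module.Basis obtained from `u` by adding `op (a j) • u p` to each `u j`. -/
noncomputable def transvect (u : Module.Basis (Fin m) Aᵐᵒᵖ V) (p : Fin m) (a : Fin m → A)
    (hap : a p = 0) : Module.Basis (Fin m) Aᵐᵒᵖ V :=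
  u.map (transvectEquiv u p a hap)

lemma transvect_apply (u : Module.Basis (Fin m) Aᵐᵒᵖ V) (p : Fin m) (a : Fin m → A)
    (hap : a p = 0) (j : Fin m) :
    transvect u p a hap j = u j + op (a j) • u p := by
  simp [transvect, transvectEquiv, Module.Basis.map_apply, lfun_basis]

end Transvect


section MainLemmas
variable {A V : Type*} [Ring A] [StarRing A] [IsLocalRing A]
    [AddCommGroup V] [Module Aᵐᵒᵖ V] {m : ℕ}

/-- Every orthogonal basis of a non-degenerate form has unit lengths. -/
lemma ortho_diag_unit (h : HermitianForm A V) (hnd : h.Nondeg)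
    (u : Module.Basis (Fin m) Aᵐᵒᵖ V)
    (hu : ∀ i j : Fin m, i ≠ j → h.toFun (u i) (u j) = 0) (i : Fin m) :
    IsUnit (h.toFun (u i) (u i)) := by
  obtain ⟨w, hw, -⟩ := hnd (coordFun u i)
  have h1 : h.toFun w (u i) = 1 := by rw [hw (u i), coordFun_basis, if_pos rfl]
  have h2 := h.expand u w (u i)
  rw [h1] at h2
  rw [Finset.sum_eq_single i
    (fun j _ hj => by rw [hu j i hj, mul_zero])
    (fun hi => absurd (Finset.mem_univ i) hi)] at h2
  exact my_isUnit_of_mul_right (h2 ▸ isUnit_one)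

/-- From non-degeneracy: a unit entry in the tail of row `k`. -/
lemma exists_unit_entry (h : HermitianForm A V) (hnd : h.Nondeg)
    {k : ℕ} (hk : k < m) (u : Module.Basis (Fin m) Aᵐᵒᵖ V)
    (hu : ∀ i j : Fin m, i ≠ j → ((i:ℕ) < k ∨ (j:ℕ) < k) → h.toFun (u i) (u j) = 0) :
    ∃ j : Fin m, k ≤ (j:ℕ) ∧ IsUnit (h.toFun (u ⟨k, hk⟩) (u j)) := by
  set kk : Fin m := ⟨k, hk⟩ with hkk
  obtain ⟨w, hw, -⟩ := hnd (coordFun u kk)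
  have h1 : h.toFun w (u kk) = 1 := by rw [hw (u kk), coordFun_basis, if_pos rfl]
  have h2 := h.expand u w (u kk)
  rw [h1] at h2
  have h3 : IsUnit (∑ j, star (unop (u.repr w j)) * h.toFun (u j) (u kk)) := by
    rw [← h2]; exact isUnit_one
  obtain ⟨j, -, hj⟩ := my_isUnit_sum h3
  have hju : IsUnit (h.toFun (u j) (u kk)) := my_isUnit_of_mul_right hj
  refine ⟨j, ?_, ?_⟩
  · by_contra hlt
    push_neg at hlt
    have hne : j ≠ kk := by
      intro e
      rw [e, hkk] at hlt
      exact absurd hlt (lt_irrefl k)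
    rw [hu j kk hne (Or.inl hlt)] at hju
    exact not_isUnit_zero hju
  · rw [h.conj_symm (u j) (u kk)]
    exact hju.star

/-- We can modify the basis (keeping the invariant) so that the `k`-th
diagonal entry becomes a unit. -/
lemma exists_diag_unit (h : HermitianForm A V) (hnd : h.Nondeg)
    (d : A) (hd : d + star d = 1)
    {k : ℕ} (hk : k < m) (u : Module.Basis (Fin m) Aᵐᵒᵖ V)
    (hu : ∀ i j : Fin m, i ≠ j → ((i:ℕ) < k ∨ (j:ℕ) < k) → h.toFun (u i) (u j) = 0) :
    ∃ u' : Module.Basis (Fin m) Aᵐᵒᵖ V,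
      (∀ i j : Fin m, i ≠ j → ((i:ℕ) < k ∨ (j:ℕ) < k) → h.toFun (u' i) (u' j) = 0) ∧
      IsUnit (h.toFun (u' ⟨k, hk⟩) (u' ⟨k, hk⟩)) := by
  obtain ⟨j, hjk, hcu⟩ := exists_unit_entry h hnd hk u hu
  set kk : Fin m := ⟨k, hk⟩ with hkk
  by_cases h0 : IsUnit (h.toFun (u kk) (u kk))
  · exact ⟨u, hu, h0⟩
  have hjne : j ≠ kk := by
    intro e; rw [e] at hcu; exact h0 hcu
  by_cases h1 : IsUnit (h.toFun (u j) (u j))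
  · refine ⟨u.reindex (Equiv.swap kk j), ?_, ?_⟩
    · intro i i' hne hlt
      simp only [Module.Basis.reindex_apply, Equiv.symm_swap]
      apply hu
      · exact fun e => hne ((Equiv.swap kk j).injective e)
      · rcases hlt with hh | hh
        · left
          have e1 : i ≠ kk := by intro e; rw [e, hkk] at hh; exact absurd hh (lt_irrefl k)
          have e2 : i ≠ j := by intro e; rw [e] at hh; omega
          rw [Equiv.swap_apply_of_ne_of_ne e1 e2]
          exact hh
        · right
          have e1 : i' ≠ kk := by intro e; rw [e, hkk] at hh; exact absurd hh (lt_irrefl k)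
          have e2 : i' ≠ j := by intro e; rw [e] at hh; omega
          rw [Equiv.swap_apply_of_ne_of_ne e1 e2]
          exact hh
    · simp only [Module.Basis.reindex_apply, Equiv.symm_swap, Equiv.swap_apply_left]
      exact h1
  · -- transvection `u kk ↦ u kk + op a • u j` with `a = cu⁻¹ * d`.
    obtain ⟨cu, hcu'⟩ := hcu
    set a : A := (↑cu⁻¹ : A) * d with ha
    set f : Fin m → A := fun i => if i = kk then a else 0 with hf
    have hfj : f j = 0 := if_neg hjne
    refine ⟨transvect u j f hfj, ?_, ?_⟩ <;>
      [skip;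
       skip]
    all_goals
      have happ : ∀ i, transvect u j f hfj i = u i + op (f i) • u j :=
        fun i => transvect_apply u j f hfj i
    all_goals
      have happ' : ∀ i, i ≠ kk → transvect u j f hfj i = u i := by
        intro i hi
        rw [happ i, hf]
        simp only [if_neg hi, op_zero, zero_smul, add_zero]
    all_goals
      have happk : transvect u j f hfj kk = u kk + op a • u j := by
        rw [happ kk, hf]
        simp
    · -- invariant preserved
      intro i i' hne hlt
      by_cases e1 : i = kk <;> by_cases e2 : i' = kk
      · exact absurd (e1.trans e2.symm) hne
      · subst e1
        have hi' : (i' : ℕ) < k := by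
          rcases hlt with hh | hh
          · rw [hkk] at hh; exact absurd hh (lt_irrefl k)
          · exact hh
        have hji' : j ≠ i' := by intro e; rw [e] at hjk; omega
        rw [happk, happ' i' e2, h.add_left', h.smul_left',
          hu kk i' hne (Or.inr hi'), hu j i' hji' (Or.inr hi'), mul_zero, add_zero]
      · subst e2
        have hi : (i : ℕ) < k := by
          rcases hlt with hh | hh
          · exact hh
          · rw [hkk] at hh; exact absurd hh (lt_irrefl k)
        have hij : i ≠ j := by intro e; rw [e] at hi; omega
        rw [happk, happ' i e1, h.add_right, h.smul_right,
          hu i kk hne (Or.inl hi), hu i j hij (Or.inl hi), zero_mul, add_zero]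
      · rw [happ' i e1, happ' i' e2]
        exact hu i i' hne hlt
    · -- the new diagonal entry is a unit
      have hca : h.toFun (u kk) (u j) * a = d := by
        rw [← hcu', ha, ← mul_assoc, cu.mul_inv, one_mul]
      have e1 : h.toFun (u kk) (op a • u j) = d := by
        rw [h.smul_right]; exact hca
      have e2 : h.toFun (op a • u j) (u kk) = star d := by
        rw [h.smul_left', h.conj_symm (u kk) (u j), ← star_mul, hca]
      have e3 : h.toFun (op a • u j) (op a • u j)
          = star a * (h.toFun (u j) (u j) * a) := by
        rw [h.smul_left', h.smul_right]
      rw [happk, h.add_left', h.add_right, h.add_right, e1, e2, e3]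
      have hkey : h.toFun (u kk) (u kk) + d + (star d + star a * (h.toFun (u j) (u j) * a))
          = 1 + (h.toFun (u kk) (u kk) + star a * (h.toFun (u j) (u j) * a)) := by
        rw [← hd]; abel
      rw [hkey]
      apply my_isUnit_one_add
      intro hK
      rcases my_isUnit_or_of_add hK with hK | hK
      · exact h0 hK
      · exact h1 (my_isUnit_of_mul_left (my_isUnit_of_mul_right hK))

/-- The clearing step: with a unit pivot at position `k`, extend the invariant
from `k` to `k + 1`. -/
lemma clear_step (h : HermitianForm A V)
    {k : ℕ} (hk : k < m) (v : Module.Basis (Fin m) Aᵐᵒᵖ V)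
    (hv : ∀ i j : Fin m, i ≠ j → ((i:ℕ) < k ∨ (j:ℕ) < k) → h.toFun (v i) (v j) = 0)
    (hdv : IsUnit (h.toFun (v ⟨k, hk⟩) (v ⟨k, hk⟩))) :
    ∃ u' : Module.Basis (Fin m) Aᵐᵒᵖ V,
      ∀ i j : Fin m, i ≠ j → ((i:ℕ) < k + 1 ∨ (j:ℕ) < k + 1) → h.toFun (u' i) (u' j) = 0 := by
  set kk : Fin m := ⟨k, hk⟩ with hkk
  obtain ⟨c0, hc0⟩ := hdv
  set a : Fin m → A := fun i => if i = kk then 0 else -((↑c0⁻¹ : A) * h.toFun (v kk) (v i))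
    with ha
  have hak : a kk = 0 := if_pos rfl
  refine ⟨transvect v kk a hak, ?_⟩
  set u' : Module.Basis (Fin m) Aᵐᵒᵖ V := transvect v kk a hak with hu'
  have happ : ∀ i, u' i = v i + op (a i) • v kk := fun i => transvect_apply v kk a hak i
  have happk : u' kk = v kk := by
    rw [happ kk, hak, op_zero, zero_smul, add_zero]
  have claim0 : ∀ i, i ≠ kk → h.toFun (u' kk) (u' i) = 0 := by
    intro i hi
    rw [happk, happ i, h.add_right, h.smul_right, ha]
    simp only [if_neg hi]
    rw [← hc0, mul_neg, ← mul_assoc, c0.mul_inv, one_mul, add_neg_cancel]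
  have claim1 : ∀ p q : Fin m, p ≠ q → (p:ℕ) < k → q ≠ kk → h.toFun (u' p) (u' q) = 0 := by
    intro p q hpq hp hq
    have hpkk : p ≠ kk := by intro e; rw [e, hkk] at hp; exact absurd hp (lt_irrefl k)
    have hap : a p = 0 := by
      rw [ha]
      simp only [if_neg hpkk]
      rw [h.conj_symm (v p) (v kk), hv p kk hpkk (Or.inl hp), star_zero, mul_zero, neg_zero]
    have hup : u' p = v p := by rw [happ p, hap, op_zero, zero_smul, add_zero]
    rw [hup, happ q, h.add_right, h.smul_right,
      hv p q hpq (Or.inl hp), hv p kk hpkk (Or.inl hp), zero_mul, add_zero]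
  intro i i' hne hlt
  by_cases e1 : i = kk
  · subst e1; exact claim0 i' (Ne.symm hne)
  by_cases e2 : i' = kk
  · subst e2
    rw [h.conj_symm (u' kk) (u' i), claim0 i e1, star_zero]
  rcases hlt with hh | hh
  · have hi : (i : ℕ) < k := by
      have : (i : ℕ) ≠ k := fun e => e1 (Fin.ext (by rw [e, hkk]))
      omega
    exact claim1 i i' hne hi e2
  · have hi' : (i' : ℕ) < k := by
      have : (i' : ℕ) ≠ k := fun e => e2 (Fin.ext (by rw [e, hkk]))
      omega
    rw [h.conj_symm (u' i') (u' i), claim1 i' i (Ne.symm hne) hi' e1, star_zero]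

end MainLemmas

/-- Lemma 2.2: `V` has an orthogonal basis, and every orthogonal basis has all
lengths units of the fixed ring `R` (lengths are automatically fixed by `*`,
and a fixed element is a unit of `R` iff it is a unit of `A`). -/
theorem stmt_1 {A V : Type*} [Ring A] [StarRing A] [IsLocalRing A]
    [AddCommGroup V] [Module Aᵐᵒᵖ V]
    (hcent : ∀ a : A, star a = a → a ∈ Set.center A)
    (d : A) (hd : d + star d = 1)
    (m : ℕ) (hm : 1 ≤ m) (b : Module.Basis (Fin m) Aᵐᵒᵖ V)
    (h : HermitianForm A V) (hnd : h.Nondeg) :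
    (∃ u : Module.Basis (Fin m) Aᵐᵒᵖ V, ∀ i j : Fin m, i ≠ j → h.toFun (u i) (u j) = 0) ∧
    (∀ u : Module.Basis (Fin m) Aᵐᵒᵖ V, (∀ i j : Fin m, i ≠ j → h.toFun (u i) (u j) = 0) →
      ∀ i : Fin m, IsUnit (h.toFun (u i) (u i))) := by
  constructor
  · -- existence of an orthogonal basis, by induction on `k`
    have main : ∀ k : ℕ, k ≤ m → ∃ u : Module.Basis (Fin m) Aᵐᵒᵖ V,
        ∀ i j : Fin m, i ≠ j → ((i:ℕ) < k ∨ (j:ℕ) < k) → h.toFun (u i) (u j) = 0 := by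
      intro k
      induction k with
      | zero =>
        intro _
        exact ⟨b, fun i j _ hlt => absurd hlt (by omega)⟩
      | succ k ih =>
        intro hk1
        have hk : k < m := hk1
        obtain ⟨u, hu⟩ := ih (Nat.le_of_lt hk1)
        obtain ⟨v, hv, hdv⟩ := exists_diag_unit h hnd d hd hk u hu
        exact clear_step h hk v hv hdv
    obtain ⟨u, hu⟩ := main m le_rfl
    exact ⟨u, fun i j hne => hu i j hne (Or.inl i.isLt)⟩
  · intro u hu i
    exact ortho_diag_unit h hnd u hu i
end

section
/- Suppose h is isotropic, i.e., there exists a primitive vector v ∈ V with h(v,v) = 0. Then for every r ∈ R there exists a primitive vector w ∈ V with h(w,w) = r. -/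
open MulOpposite

section Aux

variable {B : Type*} [Ring B] [IsLocalRing B]

/-- In a local ring, one-sided inverses are two-sided: if `a * b = 1` then `b` is a unit. -/
lemma aux_isUnit_of_mul_eq_one {a b : B} (hab : a * b = 1) : IsUnit b := by
  have he : (b * a) * (b * a) = b * a := by
    rw [mul_assoc, ← mul_assoc a b a, hab, one_mul]
  have h1 : (b * a) + (1 - b * a) = 1 := by rw [add_sub_cancel]
  rcases IsLocalRing.isUnit_or_isUnit_of_add_one h1 with hba | hba
  · obtain ⟨u, hu⟩ := hba
    have hinv : (b * a) * ↑u⁻¹ = 1 := by rw [← hu, Units.mul_inv]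
    have hba1 : b * a = 1 := by
      calc b * a = (b * a) * ((b * a) * ↑u⁻¹) := by rw [hinv, mul_one]
        _ = ((b * a) * (b * a)) * ↑u⁻¹ := (mul_assoc _ _ _).symm
        _ = (b * a) * ↑u⁻¹ := by rw [he]
        _ = 1 := hinv
    exact ⟨⟨b, a, hba1, hab⟩, rfl⟩
  · exfalso
    obtain ⟨u, hu⟩ := hba
    have he' : (1 - b * a) * (1 - b * a) = 1 - b * a := by
      rw [sub_mul, one_mul, mul_sub, mul_one, he, sub_self, sub_zero]
    have hinv : (1 - b * a) * ↑u⁻¹ = 1 := by rw [← hu, Units.mul_inv]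
    have h2 : (1 : B) - b * a = 1 := by
      calc 1 - b * a = (1 - b * a) * ((1 - b * a) * ↑u⁻¹) := by rw [hinv, mul_one]
        _ = ((1 - b * a) * (1 - b * a)) * ↑u⁻¹ := (mul_assoc _ _ _).symm
        _ = (1 - b * a) * ↑u⁻¹ := by rw [he']
        _ = 1 := hinv
    have hba0 : b * a = 0 := by
      have := sub_eq_self.mp h2
      exact this
    have hb0 : b = 0 := by
      calc b = b * (a * b) := by rw [hab, mul_one]
        _ = (b * a) * b := by rw [mul_assoc]
        _ = 0 := by rw [hba0, zero_mul]
    have : (1 : B) = 0 := by rw [← hab, hb0, mul_zero]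
    exact one_ne_zero this

/-- In a local ring, if `x * y` is a unit then `y` is a unit. -/
lemma aux_isUnit_right {x y : B} (h : IsUnit (x * y)) : IsUnit y := by
  obtain ⟨u, hu⟩ := h
  have : (↑u⁻¹ * x) * y = 1 := by rw [mul_assoc, ← hu, Units.inv_mul]
  exact aux_isUnit_of_mul_eq_one this

/-- In a (possibly noncommutative) local ring, if `a + b` is a unit then `a` or `b` is. -/
lemma aux_isUnit_or_isUnit_of_isUnit_add {a b : B} (h : IsUnit (a + b)) :
    IsUnit a ∨ IsUnit b := by
  obtain ⟨u, hu⟩ := h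
  have h1 : (↑u⁻¹ * a) + (↑u⁻¹ * b) = 1 := by rw [← mul_add, ← hu, Units.inv_mul]
  rcases IsLocalRing.isUnit_or_isUnit_of_add_one h1 with h2 | h2
  · left
    have : a = ↑u * (↑u⁻¹ * a) := by rw [← mul_assoc, Units.mul_inv, one_mul]
    rw [this]; exact u.isUnit.mul h2
  · right
    have : b = ↑u * (↑u⁻¹ * b) := by rw [← mul_assoc, Units.mul_inv, one_mul]
    rw [this]; exact u.isUnit.mul h2

/-- In a local ring, a finite sum which is a unit has a unit term. -/
lemma aux_sum_isUnit {ι : Type*} (s : Finset ι) (f : ι → B)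
    (h : IsUnit (∑ i ∈ s, f i)) : ∃ i ∈ s, IsUnit (f i) := by
  classical
  induction s using Finset.cons_induction with
  | empty =>
    rw [Finset.sum_empty] at h
    exact absurd h not_isUnit_zero
  | cons a s ha ih =>
    rw [Finset.sum_cons] at h
    rcases aux_isUnit_or_isUnit_of_isUnit_add h with h1 | h2
    · exact ⟨a, Finset.mem_cons_self a s, h1⟩
    · obtain ⟨i, hi, hui⟩ := ih h2
      exact ⟨i, Finset.mem_cons_of_mem hi, hui⟩

/-- The opposite of a local ring is local. -/
instance aux_isLocalRing_op : IsLocalRing Bᵐᵒᵖ := by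
  refine ⟨fun {a b} hab => ?_⟩
  have h0 : unop a + unop b = 1 := by
    rw [← unop_add, hab, unop_one]
  rcases IsLocalRing.isUnit_or_isUnit_of_add_one h0 with h1 | h1
  · left; rw [← op_unop a]; exact isUnit_op.mpr h1
  · right; rw [← op_unop b]; exact isUnit_op.mpr h1

/-- Replacing a basis vector by a vector whose corresponding coordinate is a unit
yields again a basis. -/
lemma aux_basis_update {V : Type*} [AddCommGroup V] [Module B V] {m : ℕ}
    (b : Module.Basis (Fin m) B V) (w : V) (j : Fin m) (hc : IsUnit (b.repr w j)) :
    ∃ b' : Module.Basis (Fin m) B V, b' j = w := by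
  classical
  set f : Fin m → V := Function.update (⇑b) j w with hf
  have hfj : f j = w := Function.update_self j w ⇑b
  have hfk : ∀ k, k ≠ j → f k = b k := fun k hk => Function.update_of_ne hk w ⇑b
  have li : LinearIndependent B f := by
    rw [Fintype.linearIndependent_iff]
    intro g hg
    have h0 : (b.repr (∑ k, g k • f k)) j = 0 := by rw [hg, map_zero]; rfl
    have hsum : (b.repr (∑ k, g k • f k)) j = g j * (b.repr w j) := by
      rw [map_sum, Finsupp.finset_sum_apply]
      rw [Finset.sum_eq_single j]
      · rw [map_smul, Finsupp.smul_apply, hfj, smul_eq_mul]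
      · intro k _ hk
        rw [map_smul, Finsupp.smul_apply, hfk k hk, b.repr_self,
          Finsupp.single_apply, if_neg hk, smul_zero]
      · intro hj; exact absurd (Finset.mem_univ j) hj
    have hgjc : g j * (b.repr w j) = 0 := by rw [← hsum, h0]
    obtain ⟨u, hu⟩ := hc
    have hgj : g j = 0 := by
      calc g j = (g j * ↑u) * ↑u⁻¹ := by rw [mul_assoc, Units.mul_inv, mul_one]
        _ = 0 := by rw [hu, hgjc, zero_mul]
    have hb : ∑ k, g k • b k = 0 := by
      rw [← hg]
      apply Finset.sum_congr rfl
      intro k _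
      by_cases hk : k = j
      · subst hk; rw [hgj, zero_smul, zero_smul]
      · rw [hfk k hk]
    exact fun i => Fintype.linearIndependent_iff.mp b.linearIndependent g hb i
  have sp : ⊤ ≤ Submodule.span B (Set.range f) := by
    rw [← b.span_eq, Submodule.span_le]
    rintro _ ⟨k, rfl⟩
    by_cases hk : k = j
    · subst hk
      obtain ⟨u, hu⟩ := hc
      have hsplit : (b.repr w k) • b k + ∑ l ∈ Finset.univ.erase k, (b.repr w l) • b l = w :=
        (Finset.add_sum_erase Finset.univ (fun l => (b.repr w l) • b l)
          (Finset.mem_univ k)).trans (b.sum_repr w)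
      have h2eq : w - ∑ l ∈ Finset.univ.erase k, (b.repr w l) • b l = (b.repr w k) • b k :=
        sub_eq_iff_eq_add.mpr hsplit.symm
      have hbk : b k = ↑u⁻¹ • (w - ∑ l ∈ Finset.univ.erase k, (b.repr w l) • b l) := by
        rw [h2eq, ← hu, ← Units.smul_def, inv_smul_smul]
      rw [hbk]
      apply Submodule.smul_mem
      apply Submodule.sub_mem
      · exact Submodule.subset_span ⟨k, hfj⟩
      · apply Submodule.sum_mem
        intro l hl
        exact Submodule.smul_mem _ _
          (Submodule.subset_span ⟨l, hfk l (Finset.ne_of_mem_erase hl)⟩)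
    · exact Submodule.subset_span ⟨k, hfk k hk⟩
  exact ⟨Module.Basis.mk li sp, by rw [Module.Basis.mk_apply]; exact hfj⟩

end Aux

section HermAux

variable {A V : Type*} [Ring A] [StarRing A] [AddCommGroup V] [Module Aᵐᵒᵖ V]

lemma herm_add_left (h : HermitianForm A V) (u v w : V) :
    h.toFun (u + v) w = h.toFun u w + h.toFun v w := by
  rw [h.conj_symm, h.add_right, star_add, ← h.conj_symm, ← h.conj_symm]

lemma herm_smul_left (h : HermitianForm A V) (a : A) (u v : V) :
    h.toFun (op a • u) v = star a * h.toFun u v := by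
  rw [h.conj_symm, h.smul_right, star_mul, ← h.conj_symm]

end HermAux

/-- Lemma 3.1: if `h` is isotropic, every element `r` of the fixed ring `R` is the
length of some primitive vector. -/
theorem stmt_5 {A V : Type*} [Ring A] [StarRing A] [IsLocalRing A]
    [AddCommGroup V] [Module Aᵐᵒᵖ V]
    (hcent : ∀ a : A, star a = a → a ∈ Set.center A)
    (d : A) (hd : d + star d = 1)
    (m : ℕ) (hm : 1 ≤ m) (b : Module.Basis (Fin m) Aᵐᵒᵖ V)
    (h : HermitianForm A V) (hnd : h.Nondeg)
    (hiso : ∃ v : V, IsPrimitive A m v ∧ h.toFun v v = 0) :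
    ∀ r : A, star r = r → ∃ w : V, IsPrimitive A m w ∧ h.toFun w w = r := by
  classical
  intro r hr
  obtain ⟨v, ⟨b0, i, hb0⟩, hvv⟩ := hiso
  -- the coordinate functional at `i` with respect to `b0`
  let φ : V →ₗ[Aᵐᵒᵖ] A :=
    { toFun := fun x => unop (b0.repr x i)
      map_add' := fun x y => by
        show unop (b0.repr (x + y) i) = unop (b0.repr x i) + unop (b0.repr y i)
        rw [map_add, Finsupp.add_apply, unop_add]
      map_smul' := fun c x => by
        show unop (b0.repr (c • x) i) = c • unop (b0.repr x i)
        rw [map_smul, Finsupp.smul_apply, smul_eq_mul, unop_mul,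
          MulOpposite.smul_eq_mul_unop] }
  obtain ⟨u, hu, -⟩ := hnd φ
  have huv : h.toFun u v = 1 := by
    rw [hu v]
    show unop (b0.repr v i) = 1
    rw [← hb0, b0.repr_self, Finsupp.single_eq_same, unop_one]
  have hvu : h.toFun v u = 1 := by rw [h.conj_symm, huv, star_one]
  set c := h.toFun u u with hcdef
  have hc : star c = c := (h.conj_symm u u).symm
  have hrc : star (r - c) = r - c := by rw [star_sub, hr, hc]
  have hcomm : ∀ x : A, x * (r - c) = (r - c) * x :=
    fun x => ((Set.mem_center_iff.mp (hcent _ hrc)).comm x).symm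
  set a := (r - c) * d with ha
  set w := op a • v + u with hwdef
  have hvw : h.toFun v w = 1 := by
    rw [hwdef, h.add_right, h.smul_right, hvv, zero_mul, zero_add, hvu]
  have hww : h.toFun w w = r := by
    rw [hwdef, herm_add_left, herm_smul_left, ← hwdef, hvw, mul_one, hwdef,
      h.add_right, h.smul_right, huv, one_mul, ← hcdef]
    have hsa : star a = (r - c) * star d := by
      rw [ha, star_mul, hrc, hcomm]
    rw [hsa, ha]
    calc (r - c) * star d + ((r - c) * d + c)
        = (r - c) * (star d + d) + c := by rw [mul_add]; abel
      _ = r := by rw [add_comm (star d) d, hd, mul_one, sub_add_cancel]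
  -- primitivity of w
  let ψ : V →+ A := AddMonoidHom.mk' (h.toFun v) (h.add_right v)
  have hsum : ∑ k, h.toFun v (b k) * unop (b.repr w k) = 1 := by
    rw [← hvw]
    conv_rhs => rw [← b.sum_repr w]
    have : h.toFun v (∑ k, b.repr w k • b k) = ∑ k, h.toFun v (b.repr w k • b k) :=
      map_sum ψ _ _
    rw [this]
    apply Finset.sum_congr rfl
    intro k _
    have hop : (b.repr w k) • b k = op (unop (b.repr w k)) • b k := by rw [op_unop]
    rw [hop, h.smul_right]
  obtain ⟨k, -, hk⟩ := aux_sum_isUnit Finset.univ _ (hsum ▸ isUnit_one)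
  have hk2 : IsUnit (b.repr w k) := by
    have hun := aux_isUnit_right hk
    rw [← op_unop (b.repr w k)]
    exact isUnit_op.mpr hun
  obtain ⟨b', hb'⟩ := aux_basis_update b w k hk2
  exact ⟨w, ⟨b', k, hb'⟩, hww⟩
end

section
/- In particular, the division ring A/r is always commutative (under the standing hypotheses). -/
open MulOpposite

section LocalAux

variable {A : Type*} [Ring A] [IsLocalRing A]

lemma aux_isUnit_of_mul_eq_one_s7 {a c : A} (h : a * c = 1) : IsUnit a := by
  have he : (c * a) * (c * a) = c * a := by
    calc (c * a) * (c * a) = c * (a * c) * a := by noncomm_ring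
    _ = c * a := by rw [h]; noncomm_ring
  rcases IsLocalRing.isUnit_or_isUnit_of_add_one (a := c * a) (b := 1 - (c*a))
      (by noncomm_ring) with hu | hu
  · have h1 : c * a = 1 := hu.mul_left_cancel (by rw [mul_one, he])
    exact ⟨⟨a, c, h, h1⟩, rfl⟩
  · exfalso
    have h0 : (1 - c * a) * (c * a) = (1 - c * a) * 0 := by
      rw [sub_mul, he, mul_zero]; noncomm_ring
    have hca : (c : A) * a = 0 := hu.mul_left_cancel h0
    have hc : c = 0 := by
      have : c * (a * c) = 0 := by rw [← mul_assoc, hca, zero_mul]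
      rwa [h, mul_one] at this
    rw [hc, mul_zero] at h
    exact one_ne_zero h.symm

lemma aux_isUnit_of_mul_eq_one' {a c : A} (h : c * a = 1) : IsUnit a := by
  rcases aux_isUnit_of_mul_eq_one_s7 h with ⟨u, hu⟩
  have : a = ↑u⁻¹ := by
    have : (↑u⁻¹ : A) * (c * a) = ↑u⁻¹ := by rw [h, mul_one]
    rwa [← mul_assoc, ← hu, Units.inv_mul, one_mul] at this
  exact this ▸ (u⁻¹).isUnit

lemma aux_mul_nonunit_left {a : A} (ha : a ∈ nonunits A) (b : A) : b * a ∈ nonunits A := by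
  rintro ⟨u, hu⟩
  exact ha (aux_isUnit_of_mul_eq_one' (c := ↑u⁻¹ * b)
    (by rw [mul_assoc, ← hu, Units.inv_mul]))

lemma aux_mul_nonunit_right {a : A} (ha : a ∈ nonunits A) (b : A) : a * b ∈ nonunits A := by
  rintro ⟨u, hu⟩
  exact ha (aux_isUnit_of_mul_eq_one_s7 (c := b * ↑u⁻¹)
    (by rw [← mul_assoc, ← hu, Units.mul_inv]))

lemma aux_nonunits_add {a b : A} (ha : a ∈ nonunits A) (hb : b ∈ nonunits A) :
    a + b ∈ nonunits A := by
  rintro ⟨u, hu⟩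
  rcases IsLocalRing.isUnit_or_isUnit_of_add_one (a := ↑u⁻¹ * a) (b := ↑u⁻¹ * b)
      (by rw [← mul_add, ← hu, Units.inv_mul]) with h | h
  · exact ha (by simpa using (Units.isUnit_units_mul u (↑u⁻¹ * a)).mpr h)
  · exact hb (by simpa using (Units.isUnit_units_mul u (↑u⁻¹ * b)).mpr h)

/-- The Jacobson radical of a (possibly noncommutative) local ring as a two-sided ideal. -/
def radIdeal (A : Type*) [Ring A] [IsLocalRing A] : TwoSidedIdeal A :=
  TwoSidedIdeal.mk' (nonunits A) (not_isUnit_zero)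
    (fun hx hy => aux_nonunits_add hx hy)
    (fun hx => fun h => hx (by simpa using h.neg))
    (fun hy => aux_mul_nonunit_left hy _)
    (fun hx => aux_mul_nonunit_right hx _)

/-- The residue division ring `A / rad A`. -/
abbrev ResidueDiv (A : Type*) [Ring A] [IsLocalRing A] :=
  (radIdeal A).ringCon.Quotient

lemma radIdeal_rel_iff {a b : A} : (radIdeal A).ringCon a b ↔ a - b ∈ nonunits A := by
  rw [TwoSidedIdeal.rel_iff]
  exact TwoSidedIdeal.mem_mk' _ _ _ _ _ _ _

/-- Quotient map. -/
abbrev resDiv (A : Type*) [Ring A] [IsLocalRing A] : A →+* ResidueDiv A :=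
  (radIdeal A).ringCon.mk'

lemma resDiv_eq_iff {a b : A} : resDiv A a = resDiv A b ↔ a - b ∈ nonunits A := by
  rw [← radIdeal_rel_iff]
  exact RingCon.eq _

lemma resDiv_surjective : Function.Surjective (resDiv A) := fun x => Quot.exists_rep x

instance : Nontrivial (ResidueDiv A) := by
  refine ⟨0, 1, fun h => ?_⟩
  have : (0 : A) - 1 ∈ nonunits A := resDiv_eq_iff.mp (by simpa using h)
  simp only [zero_sub] at this
  exact this (by simpa using isUnit_one.neg)

instance : NoZeroDivisors (ResidueDiv A) := by
  constructor
  intro x y hxy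
  obtain ⟨a, rfl⟩ := resDiv_surjective (A := A) x
  obtain ⟨b, rfl⟩ := resDiv_surjective (A := A) y
  have hab : a * b ∈ nonunits A := by
    have : resDiv A (a * b) = resDiv A 0 := by rw [map_mul, hxy, map_zero]
    simpa using resDiv_eq_iff.mp this
  by_cases ha : IsUnit a
  · right
    have hb : b ∈ nonunits A := fun hb => hab (ha.mul hb)
    rw [show (0 : ResidueDiv A) = resDiv A 0 from (map_zero _).symm]
    exact resDiv_eq_iff.mpr (by simpa using hb)
  · left
    rw [show (0 : ResidueDiv A) = resDiv A 0 from (map_zero _).symm]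
    exact resDiv_eq_iff.mpr (by simpa using ha)

instance : IsDomain (ResidueDiv A) := NoZeroDivisors.to_isDomain _

end LocalAux

section Key

open IsLocalRing

variable {A : Type*} [Ring A] [StarRing A] [IsLocalRing A]
  {R : Type*} [CommRing R] [IsLocalRing R] [Algebra R A]

set_option maxHeartbeats 1000000 in
set_option synthInstance.maxHeartbeats 1000000 in
lemma key_comm (hcent : ∀ a : A, star a = a → a ∈ Set.center A)
    (hinj : Function.Injective (algebraMap R A))
    (hfix : ∀ a : A, star a = a ↔ a ∈ Set.range (algebraMap R A))
    [Finite (ResidueField R)]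
    {t u : A} (ht : star t = -t) (hu : star u = -u) :
    t * u - u * t ∈ nonunits A := by
  classical
  set φ := algebraMap R A with hφ
  have hsymm : ∀ r : R, star (φ r) = φ r := fun r => (hfix _).2 ⟨r, rfl⟩
  have hcen : ∀ (r : R) (x : A), x * φ r = φ r * x := fun r x =>
    Semigroup.mem_center_iff.mp (hcent _ (hsymm r)) x
  -- the maximal ideal of R maps into the nonunits of A
  have hm : ∀ r ∈ maximalIdeal R, φ r ∈ nonunits A := by
    intro r hr hunit
    obtain ⟨v, hv⟩ := hunit
    have hsv : star ((↑v⁻¹ : A)) = ↑v⁻¹ := by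
      have h1 : star (↑v⁻¹ : A) * (↑v : A) = 1 := by
        have : star (↑v⁻¹ : A) * star (↑v : A) = 1 := by
          rw [← star_mul, Units.mul_inv, star_one]
        rwa [hv, hsymm, ← hv] at this
      calc star (↑v⁻¹ : A) = star (↑v⁻¹ : A) * ((↑v : A) * ↑v⁻¹) := by
            rw [Units.mul_inv, mul_one]
        _ = ↑v⁻¹ := by rw [← mul_assoc, h1, one_mul]
    obtain ⟨r', hr'⟩ := (hfix _).1 hsv
    have : φ (r * r') = φ 1 := by
      rw [map_mul, map_one, hr', ← hv, Units.mul_inv]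
    have hrr : r * r' = 1 := hinj this
    exact hr (IsUnit.of_mul_eq_one (a := r) r' hrr)
  -- the residue division ring and the finite central subfield
  set D := ResidueDiv A
  set π := resDiv A with hπ
  set K := ResidueField R
  have hker : ∀ r ∈ maximalIdeal R, π.comp φ r = 0 := by
    intro r hr
    show π (φ r) = 0
    rw [show (0 : D) = π 0 from (map_zero _).symm]
    exact resDiv_eq_iff.mpr (by simpa using hm r hr)
  set ψ : K →+* D := Ideal.Quotient.lift (maximalIdeal R) (π.comp φ) hker with hψdef
  have hψ : ∀ r : R, ψ (residue R r) = π (φ r) := fun r =>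
    Ideal.Quotient.lift_mk _ _ _
  have ψcen : ∀ (k : K) (x : D), ψ k * x = x * ψ k := by
    intro k x
    obtain ⟨r, rfl⟩ := residue_surjective (R := R) k
    obtain ⟨a, rfl⟩ := resDiv_surjective (A := A) x
    rw [hψ, ← map_mul, ← map_mul, hcen]
  letI : Algebra K D := RingHom.toAlgebra' ψ ψcen
  have hsmul : ∀ (k : K) (x : D), k • x = ψ k * x := fun k x => rfl
  -- the three structure constants
  have hαs : star (t * t) = t * t := by rw [star_mul, ht, neg_mul_neg]
  have hβs : star (u * u) = u * u := by rw [star_mul, hu, neg_mul_neg]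
  have hγs : star (t * u + u * t) = t * u + u * t := by
    rw [star_add, star_mul, star_mul, ht, hu, neg_mul_neg, neg_mul_neg, add_comm]
  obtain ⟨rα, hα⟩ := (hfix _).1 hαs
  obtain ⟨rβ, hβ⟩ := (hfix _).1 hβs
  obtain ⟨rγ, hγ⟩ := (hfix _).1 hγs
  set T := π t
  set U := π u
  set a' := residue R rα
  set b' := residue R rβ
  set c' := residue R rγ
  have hTT : T * T = ψ a' := by rw [hψ, hα, map_mul]
  have hUU : U * U = ψ b' := by rw [hψ, hβ, map_mul]
  have hγ' : T * U + U * T = ψ c' := by rw [hψ, hγ, map_add, map_mul, map_mul]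
  have hUT : U * T = ψ c' - T * U := by rw [eq_sub_iff_add_eq, add_comm]; exact hγ'
  -- the finite subring generated by T and U over the residue field
  set p : Submodule K D := Submodule.span K {(1 : D), T, U, T * U} with hp
  have h1p : (1 : D) ∈ p := Submodule.subset_span (by simp)
  have hTp : T ∈ p := Submodule.subset_span (by simp)
  have hUp : U ∈ p := Submodule.subset_span (by simp)
  have hEp : T * U ∈ p := Submodule.subset_span (by simp)
  have hψp : ∀ k : K, ψ k ∈ p := by
    intro k
    have : ψ k = k • (1 : D) := by rw [hsmul, mul_one]
    rw [this]; exact p.smul_mem _ h1p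
  have hT1 : ∀ x ∈ p, x * T ∈ p := by
    intro x hx
    refine Submodule.span_induction ?_ ?_ ?_ ?_ hx
    · intro y hy
      simp only [Set.mem_insert_iff, Set.mem_singleton_iff] at hy
      rcases hy with rfl | rfl | rfl | rfl
      · rw [one_mul]; exact hTp
      · rw [hTT]; exact hψp _
      · rw [hUT]; exact p.sub_mem (hψp _) hEp
      · have : T * U * T = c' • T - a' • U := by
          rw [mul_assoc, hUT, mul_sub, ← mul_assoc, hTT, hsmul, hsmul, ψcen c' T]
        rw [this]; exact p.sub_mem (p.smul_mem _ hTp) (p.smul_mem _ hUp)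
    · rw [zero_mul]; exact p.zero_mem
    · intro x y _ _ hx' hy'
      rw [add_mul]; exact p.add_mem hx' hy'
    · intro k x _ hx'
      rw [smul_mul_assoc]; exact p.smul_mem _ hx'
  have hU1 : ∀ x ∈ p, x * U ∈ p := by
    intro x hx
    refine Submodule.span_induction ?_ ?_ ?_ ?_ hx
    · intro y hy
      simp only [Set.mem_insert_iff, Set.mem_singleton_iff] at hy
      rcases hy with rfl | rfl | rfl | rfl
      · rw [one_mul]; exact hUp
      · exact hEp
      · rw [hUU]; exact hψp _
      · have : T * U * U = b' • T := by
          rw [mul_assoc, hUU, hsmul, ψcen b' T]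
        rw [this]; exact p.smul_mem _ hTp
    · rw [zero_mul]; exact p.zero_mem
    · intro x y _ _ hx' hy'
      rw [add_mul]; exact p.add_mem hx' hy'
    · intro k x _ hx'
      rw [smul_mul_assoc]; exact p.smul_mem _ hx'
  have hmul : ∀ x ∈ p, ∀ y ∈ p, x * y ∈ p := by
    intro x hx y hy
    refine Submodule.span_induction ?_ ?_ ?_ ?_ hy
    · intro z hz
      simp only [Set.mem_insert_iff, Set.mem_singleton_iff] at hz
      rcases hz with rfl | rfl | rfl | rfl
      · rw [mul_one]; exact hx
      · exact hT1 x hx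
      · exact hU1 x hx
      · rw [← mul_assoc]; exact hU1 _ (hT1 x hx)
    · rw [mul_zero]; exact p.zero_mem
    · intro y z _ _ hy' hz'
      rw [mul_add]; exact p.add_mem hy' hz'
    · intro k y _ hy'
      rw [mul_smul_comm]; exact p.smul_mem _ hy'
  set S : Subring D :=
    { carrier := (p : Set D)
      one_mem' := h1p
      mul_mem' := fun hx hy => hmul _ hx _ hy
      zero_mem' := p.zero_mem
      add_mem' := fun hx hy => p.add_mem hx hy
      neg_mem' := fun hx => p.neg_mem hx } with hS
  -- S is finite
  set f : K × K × K × K → D :=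
    fun c => c.1 • 1 + c.2.1 • T + c.2.2.1 • U + c.2.2.2 • (T * U) with hf
  have hsub : (p : Set D) ⊆ Set.range f := by
    intro x hx
    refine Submodule.span_induction ?_ ?_ ?_ ?_ hx
    · intro y hy
      simp only [Set.mem_insert_iff, Set.mem_singleton_iff] at hy
      rcases hy with rfl | rfl | rfl | rfl
      · exact ⟨(1, 0, 0, 0), by simp [hf]⟩
      · exact ⟨(0, 1, 0, 0), by simp [hf]⟩
      · exact ⟨(0, 0, 1, 0), by simp [hf]⟩
      · exact ⟨(0, 0, 0, 1), by simp [hf]⟩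
    · exact ⟨(0, 0, 0, 0), by simp [hf]⟩
    · rintro x y _ _ ⟨c, rfl⟩ ⟨d, rfl⟩
      refine ⟨c + d, ?_⟩
      simp only [hf, Prod.fst_add, Prod.snd_add, add_smul]
      abel
    · rintro k x _ ⟨c, rfl⟩
      refine ⟨k • c, ?_⟩
      simp only [hf, Prod.smul_fst, Prod.smul_snd, smul_add, smul_smul, smul_eq_mul]
  have hfin : (p : Set D).Finite := (Set.finite_range f).subset hsub
  haveI hfinS : Finite S := hfin.to_subtype
  haveI : IsDomain S := inferInstance
  have hfield := Finite.isDomain_to_isField S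
  have hTS : T ∈ S := hTp
  have hUS : U ∈ S := hUp
  have hc := hfield.mul_comm ⟨T, hTS⟩ ⟨U, hUS⟩
  have hTU : T * U = U * T := congrArg Subtype.val hc
  have : π (t * u) = π (u * t) := by rw [map_mul, map_mul]; exact hTU
  exact by simpa using resDiv_eq_iff.mp this

end Key

set_option maxHeartbeats 1000000 in
set_option synthInstance.maxHeartbeats 1000000 in
/-- The division ring `A/𝔯` is always commutative under the standing hypotheses,
expressed here as: every commutator lies in the Jacobson radical `𝔯 = nonunits A`. -/
theorem stmt_7 {A : Type*} [Ring A] [StarRing A] [IsLocalRing A]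
    (hcent : ∀ a : A, star a = a → a ∈ Set.center A)
    (h2 : IsUnit (2 : A))
    (R : Type*) [CommRing R] [IsLocalRing R] [Algebra R A]
    (hinj : Function.Injective (algebraMap R A))
    (hfix : ∀ a : A, star a = a ↔ a ∈ Set.range (algebraMap R A))
    [Finite (IsLocalRing.ResidueField R)]
    (hodd : Odd (Nat.card (IsLocalRing.ResidueField R)))
    (hsq : ∀ x ∈ IsLocalRing.maximalIdeal R,
      ∃ y ∈ IsLocalRing.maximalIdeal R, (1 + y) ^ 2 = 1 + x) :
    ∀ a b : A, a * b - b * a ∈ nonunits A := by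
  intro a b
  obtain ⟨i, h2i⟩ : ∃ i : A, 2 * i = 1 := by
    rcases h2 with ⟨v, hv⟩
    exact ⟨↑v⁻¹, by rw [← hv]; exact v.mul_inv⟩
  have hstar2 : star (2 : A) = 2 := by simp
  have hstari : star i = i := by
    have h1 : star i * 2 = 1 := by rw [← hstar2, ← star_mul, h2i, star_one]
    calc star i = star i * (2 * i) := by rw [h2i, mul_one]
      _ = i := by rw [← mul_assoc, h1, one_mul]
  have hicen : ∀ x : A, x * i = i * x := fun x =>
    Semigroup.mem_center_iff.mp (hcent i hstari) x
  have hdecomp : ∀ x : A, ∃ s tx : A, x = s + tx ∧ star s = s ∧ star tx = -tx := by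
    intro x
    set s : A := (x + star x) * i with hsdef
    have hs : star s = s := by
      rw [hsdef, star_mul, hstari, star_add, star_star, add_comm (star x) x, ← hicen]
    have hss : s + s = x + star x := by
      rw [hsdef, ← mul_add, ← two_mul, h2i, mul_one]
    refine ⟨s, x - s, by abel, hs, ?_⟩
    rw [star_sub, hs, neg_sub]
    rw [sub_eq_sub_iff_add_eq_add]
    rw [hss]
    abel
  obtain ⟨s, t, ha, hs, ht⟩ := hdecomp a
  obtain ⟨s', u, hb, hs', hu⟩ := hdecomp b
  have hsc := Semigroup.mem_center_iff.mp (hcent s hs)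
  have hsc' := Semigroup.mem_center_iff.mp (hcent s' hs')
  have hred : a * b - b * a = t * u - u * t := by
    rw [ha, hb, add_mul, add_mul, mul_add, mul_add, mul_add, mul_add,
      hsc u, hsc s', hsc' t]
    abel
  rw [hred]
  exact key_comm hcent hinj hfix ht hu
end

section
/- Let R be a commutative local ring with maximal ideal m, residue field F_q of odd order, with surjective squaring map on 1+m, and let c ∈ R* be such that −c is not a square in R*. Then S = R[t]/(t² + c) is a local ring with maximal ideal Sm, S/Sm is a quadratic field extension of R/m, and the norm map J : S* → R*, t₁ + t₂δ ↦ t₁² + c t₂² (where δ is the image of t), is surjective. -/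
open Polynomial

/-- Adjusting an element congruent to a unit `r` mod the maximal ideal by the
square of a unit, using surjectivity of squaring on `1 + 𝔪`. -/
lemma aux_adjust {R : Type*} [CommRing R] [IsLocalRing R]
    (hsq : ∀ x ∈ IsLocalRing.maximalIdeal R,
      ∃ y ∈ IsLocalRing.maximalIdeal R, (1 + y) ^ 2 = 1 + x)
    {r a : R} (hr : IsUnit r) (h : a - r ∈ IsLocalRing.maximalIdeal R) :
    ∃ v : R, v ^ 2 * a = r := by
  have ha : IsUnit a := by
    by_contra hna
    have h1 : a ∈ IsLocalRing.maximalIdeal R := hna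
    have h2 : r ∈ IsLocalRing.maximalIdeal R := by
      have := Ideal.sub_mem _ h1 h
      simpa using this
    exact h2 hr
  set ai : R := ↑ha.unit⁻¹ with hai
  have haai : a * ai = 1 := by simp [hai]
  have hu : r * ai - 1 ∈ IsLocalRing.maximalIdeal R := by
    have heq : r * ai - 1 = -((a - r) * ai) := by
      calc r * ai - 1 = r * ai - a * ai := by rw [haai]
        _ = -((a - r) * ai) := by ring
    rw [heq]
    exact neg_mem (Ideal.mul_mem_right _ _ h)
  obtain ⟨y, hy, hy2⟩ := hsq (r * ai - 1) hu
  refine ⟨1 + y, ?_⟩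
  rw [hy2]
  have : (1 + (r * ai - 1)) * a = r * (ai * a) := by ring
  rw [this, mul_comm ai a, haai, mul_one]

/-- If `-c` is not a square in `R`, it is not a square in the residue field either. -/
lemma aux_noroot {R : Type*} [CommRing R] [IsLocalRing R]
    (hsq : ∀ x ∈ IsLocalRing.maximalIdeal R,
      ∃ y ∈ IsLocalRing.maximalIdeal R, (1 + y) ^ 2 = 1 + x)
    {c : R} (hc : IsUnit c) (hnsq : ¬ ∃ u : R, u ^ 2 = -c) :
    ∀ z : IsLocalRing.ResidueField R, z ^ 2 ≠ -(IsLocalRing.residue R c) := by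
  intro z hz
  obtain ⟨u, rfl⟩ := IsLocalRing.residue_surjective (R := R) z
  have hmem : u ^ 2 - (-c) ∈ IsLocalRing.maximalIdeal R := by
    have : IsLocalRing.residue R (u ^ 2 - (-c)) = 0 := by
      rw [map_sub, map_neg, map_pow, hz]; ring
    exact (Ideal.Quotient.eq_zero_iff_mem).mp this
  obtain ⟨v, hv⟩ := aux_adjust hsq (hc.neg) hmem
  exact hnsq ⟨v * u, by rw [mul_pow]; exact hv⟩

/-- Every unit of `R` is of the form `t₁² + c·t₂²`. -/
lemma aux_norm_surj {R : Type*} [CommRing R] [IsLocalRing R]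
    [Finite (IsLocalRing.ResidueField R)]
    (hodd : Odd (Nat.card (IsLocalRing.ResidueField R)))
    (hsq : ∀ x ∈ IsLocalRing.maximalIdeal R,
      ∃ y ∈ IsLocalRing.maximalIdeal R, (1 + y) ^ 2 = 1 + x)
    {c : R} (hc : IsUnit c) :
    ∀ r : R, IsUnit r → ∃ t₁ t₂ : R, t₁ ^ 2 + c * t₂ ^ 2 = r := by
  intro r hr
  letI : Fintype (IsLocalRing.ResidueField R) := Fintype.ofFinite _
  have hcard : Fintype.card (IsLocalRing.ResidueField R) % 2 = 1 := by
    rw [← Nat.card_eq_fintype_card, ← Nat.odd_iff]; exact hodd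
  have hc0 : IsLocalRing.residue R c ≠ 0 := by
    simpa [Ideal.Quotient.eq_zero_iff_mem] using
      fun hmem : c ∈ IsLocalRing.maximalIdeal R => hmem hc
  obtain ⟨a, b, hab⟩ := FiniteField.exists_root_sum_quadratic
    (f := (X : (IsLocalRing.ResidueField R)[X]) ^ 2)
    (g := C (IsLocalRing.residue R c) * X ^ 2 - C (IsLocalRing.residue R r))
    (degree_X_pow 2)
    (by
      rw [degree_sub_eq_left_of_degree_lt]
      · exact (degree_C_mul_X_pow 2 hc0)
      · rw [degree_C_mul_X_pow 2 hc0]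
        exact lt_of_le_of_lt (degree_C_le) (by norm_num))
    hcard
  simp only [eval_pow, eval_X, eval_sub, eval_mul, eval_C] at hab
  obtain ⟨t₁, ht₁⟩ := IsLocalRing.residue_surjective (R := R) a
  obtain ⟨t₂, ht₂⟩ := IsLocalRing.residue_surjective (R := R) b
  have hmem : (t₁ ^ 2 + c * t₂ ^ 2) - r ∈ IsLocalRing.maximalIdeal R := by
    rw [← Ideal.Quotient.eq_zero_iff_mem]
    show IsLocalRing.residue R _ = 0
    rw [map_sub, map_add, map_mul, map_pow, map_pow, ht₁, ht₂]
    linear_combination hab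
  obtain ⟨v, hv⟩ := aux_adjust hsq hr hmem
  exact ⟨v * t₁, v * t₂, by rw [← hv]; ring⟩

/-- The key construction in Proposition 3.4: for a commutative local ring `R` with
finite residue field of odd order, squaring surjective on `1 + 𝔪`, and a unit `c`
such that `-c` is not a square, the ring `S = R[t]/(t² + c)` is local with maximal
ideal `S𝔪`, `S/S𝔪` is a quadratic extension of `R/𝔪` (it has order `q²`), and the
norm map `J : S* → R*`, `t₁ + t₂δ ↦ t₁² + c t₂²`, is surjective. -/
theorem stmt_9 (R : Type*) [CommRing R] [IsLocalRing R]
    [Finite (IsLocalRing.ResidueField R)]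
    (hodd : Odd (Nat.card (IsLocalRing.ResidueField R)))
    (hsq : ∀ x ∈ IsLocalRing.maximalIdeal R,
      ∃ y ∈ IsLocalRing.maximalIdeal R, (1 + y) ^ 2 = 1 + x)
    (c : R) (hc : IsUnit c) (hnsq : ¬ ∃ u : R, u ^ 2 = -c)
    (S : Type*) [CommRing S] [Algebra R S]
    (e : S ≃ₐ[R] AdjoinRoot (X ^ 2 + C c))
    (M : Ideal S) (hM : M = Ideal.map (algebraMap R S) (IsLocalRing.maximalIdeal R)) :
    (∀ s : S, IsUnit s ↔ s ∉ M) ∧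
    IsField (S ⧸ M) ∧
    Nat.card (S ⧸ M) = Nat.card (IsLocalRing.ResidueField R) ^ 2 ∧
    (∀ r : R, IsUnit r → ∃ t₁ t₂ : R, t₁ ^ 2 + c * t₂ ^ 2 = r) := by
  have hnoroot := aux_noroot hsq hc hnsq
  set k := IsLocalRing.ResidueField R
  set f : R[X] := X ^ 2 + C c with hfdef
  set A := AdjoinRoot f
  set m := IsLocalRing.maximalIdeal R
  set g : k[X] := X ^ 2 + C (IsLocalRing.residue R c) with hgdef
  -- the reduced polynomial is irreducible
  have hgmonic : g.Monic := monic_X_pow_add_C _ (by norm_num)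
  have hgdeg : g.natDegree = 2 := by
    simpa [hgdef] using natDegree_X_pow_add_C (n := 2) (r := IsLocalRing.residue R c)
  have hirr : Irreducible g := by
    rw [irreducible_iff_roots_eq_zero_of_degree_le_three (by omega) (by omega)]
    rw [Multiset.eq_zero_iff_forall_notMem]
    intro z hz
    rw [mem_roots hgmonic.ne_zero] at hz
    refine hnoroot z ?_
    have := hz
    simp only [hgdef, IsRoot, eval_add, eval_pow, eval_X, eval_C] at this
    linear_combination this
  haveI : Fact (Irreducible g) := ⟨hirr⟩
  -- the isomorphism S ⧸ M ≃+* AdjoinRoot g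
  have hmap : Ideal.map (e : S →+* A) M = Ideal.map (algebraMap R A) m := by
    rw [hM, Ideal.map_map]
    congr 1
    exact (e.toAlgHom.comp_algebraMap)
  have e1 : (S ⧸ M) ≃+* (A ⧸ Ideal.map (algebraMap R A) m) :=
    Ideal.quotientEquiv M _ e.toRingEquiv hmap.symm
  have hgmap : f.map (Ideal.Quotient.mk m) = g := by
    simp [hfdef, hgdef, Polynomial.map_add, Polynomial.map_pow, Polynomial.map_X,
      Polynomial.map_C]
    rfl
  have e2 : (A ⧸ Ideal.map (algebraMap R A) m) ≃+* AdjoinRoot g := by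
    have := AdjoinRoot.quotAdjoinRootEquivQuotPolynomialQuot m f
    rw [hgmap] at this
    rw [AdjoinRoot.algebraMap_eq]
    exact this
  have E : (S ⧸ M) ≃+* AdjoinRoot g := e1.trans e2
  -- the quotient is a field
  have hfield : IsField (S ⧸ M) :=
    MulEquiv.isField (Field.toIsField _) E.toMulEquiv
  -- cardinality
  have hcard : Nat.card (S ⧸ M) = Nat.card k ^ 2 := by
    rw [Nat.card_congr E.toEquiv]
    set pb : PowerBasis k (AdjoinRoot g) := AdjoinRoot.powerBasis hgmonic.ne_zero with hpb
    have hdim : pb.dim = 2 := by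
      rw [hpb, AdjoinRoot.powerBasis_dim, hgdeg]
    rw [Nat.card_congr pb.basis.equivFun.toEquiv, Nat.card_fun]
    simp [hdim]
  -- the units statement
  have hunits : ∀ s : S, IsUnit s ↔ s ∉ M := by
    have hfmonic : f.Monic := monic_X_pow_add_C _ (by norm_num)
    haveI : Module.Finite R A :=
      Module.Finite.of_basis (AdjoinRoot.powerBasis' hfmonic).basis
    haveI : Module.Finite R S := Module.Finite.equiv e.symm.toLinearEquiv
    haveI : Algebra.IsIntegral R S := Algebra.IsIntegral.of_finite R S
    haveI : Nontrivial (S ⧸ M) := ⟨hfield.exists_pair_ne⟩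
    have hMne : M ≠ ⊤ := by
      intro h
      have : Subsingleton (S ⧸ M) := by
        rw [h] at *
        exact Ideal.Quotient.subsingleton_iff.mpr rfl
      exact false_of_nontrivial_of_subsingleton (S ⧸ M)
    have hMle : ∀ (n : Ideal S), n.IsMaximal → M ≤ n := by
      intro n hn
      rw [hM, Ideal.map_le_iff_le_comap]
      have : (n.comap (algebraMap R S)).IsMaximal :=
        Ideal.isMaximal_comap_of_isIntegral_of_isMaximal n
      rw [IsLocalRing.eq_maximalIdeal this]
    intro s
    constructor
    · intro hs hmem
      exact hMne (Ideal.eq_top_of_isUnit_mem M hmem hs)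
    · intro hs
      have h0 : Ideal.Quotient.mk M s ≠ 0 := by
        rwa [Ne, Ideal.Quotient.eq_zero_iff_mem]
      obtain ⟨tb, htb⟩ := hfield.mul_inv_cancel h0
      obtain ⟨t, rfl⟩ := Ideal.Quotient.mk_surjective tb
      have hst : s * t - 1 ∈ M := by
        rw [← Ideal.Quotient.eq_zero_iff_mem, map_sub, map_mul, map_one, htb, sub_self]
      have hunit : IsUnit (s * t) := by
        by_contra hn
        obtain ⟨n, hnmax, hmemn⟩ := exists_max_ideal_of_mem_nonunits hn
        have h1 : (1 : S) ∈ n := by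
          have := n.sub_mem hmemn (hMle n hnmax hst)
          simpa using this
        exact hnmax.ne_top (Ideal.eq_top_of_isUnit_mem n h1 isUnit_one)
      exact isUnit_of_mul_isUnit_left hunit
  exact ⟨hunits, hfield, hcard, aux_norm_surj hodd hsq hc⟩
end
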